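/- arXiv:1706.05552 — 3 statements merged into one kernel-verified Lean document; each statement's English description precedes it below -/
import Mathlib

section
/- Let $y_1, y_2, \ldots$ be i.i.d. real random variables and for $n \geq m$ define the moving sum $S_n = \sum_{i=n-m+1}^n y_i$. Then for any integers $k \geq m$, $N \geq 1$, and any threshold $h$, the probability that all of $S_k, S_{k+1}, \ldots, S_{k+N-1}$ are less than $h$ is at least $[\mathbb{P}(S_m < h)]^N$. -/
open MeasureTheory ProbabilityTheory Finset

/-- Moving sum `S n = ∑_{i=n-m+1}^n y i`. -/
noncomputable def movSum {Ω : Type*} (m : ℕ) (y : ℕ → Ω → ℝ) (n : ℕ) (ω : Ω) : ℝ :=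
  ∑ i ∈ Finset.Icc (n + 1 - m) n, y i ω



/-- Bounded measurable functions are integrable on finite measures. -/
lemma my_integrable {δ : Type*} [MeasurableSpace δ] (μ : Measure δ) [IsFiniteMeasure μ]
    {f : δ → ℝ} (hf : Measurable f) (hb : ∀ x, |f x| ≤ 1) : Integrable f μ :=
  Integrable.mono' (integrable_const 1) hf.aestronglyMeasurable
    (Filter.Eventually.of_forall fun x => hb x)

/-- 1-D Harris inequality (Chebyshev correlation inequality). -/
lemma harris_one (ν : Measure ℝ) [IsProbabilityMeasure ν]
    {F G : ℝ → ℝ} (hF : Monotone F) (hG : Monotone G)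
    (hFm : Measurable F) (hGm : Measurable G)
    (hF0 : ∀ x, F x ∈ Set.Icc (0:ℝ) 1) (hG0 : ∀ x, G x ∈ Set.Icc (0:ℝ) 1) :
    (∫ x, F x ∂ν) * (∫ x, G x ∂ν) ≤ ∫ x, F x * G x ∂ν := by
  have hbF : ∀ x, |F x| ≤ 1 := fun x => abs_le.2 ⟨by linarith [(hF0 x).1], (hF0 x).2⟩
  have hbG : ∀ x, |G x| ≤ 1 := fun x => abs_le.2 ⟨by linarith [(hG0 x).1], (hG0 x).2⟩
  have hiF : Integrable F ν := my_integrable ν hFm hbF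
  have hiG : Integrable G ν := my_integrable ν hGm hbG
  have hbFG : ∀ x, |F x * G x| ≤ 1 := by
    intro x
    rw [abs_mul]
    calc |F x| * |G x| ≤ 1 * 1 := by
          exact mul_le_mul (hbF x) (hbG x) (abs_nonneg _) zero_le_one
      _ = 1 := one_mul 1
  have hiFG : Integrable (fun x => F x * G x) ν := my_integrable ν (hFm.mul hGm) hbFG
  -- two-copy trick on ν.prod ν
  set μ2 := ν.prod ν with hμ2
  have key : (0:ℝ) ≤ ∫ p : ℝ × ℝ, (F p.1 - F p.2) * (G p.1 - G p.2) ∂μ2 := by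
    apply integral_nonneg
    intro p
    show (0:ℝ) ≤ (F p.1 - F p.2) * (G p.1 - G p.2)
    rcases le_total p.1 p.2 with hle | hle
    · nlinarith [mul_nonneg (sub_nonneg.2 (hF hle)) (sub_nonneg.2 (hG hle))]
    · nlinarith [mul_nonneg (sub_nonneg.2 (hF hle)) (sub_nonneg.2 (hG hle))]
  -- compute the integral
  have m1 : Measurable fun p : ℝ × ℝ => F p.1 := hFm.comp measurable_fst
  have m2 : Measurable fun p : ℝ × ℝ => F p.2 := hFm.comp measurable_snd
  have m3 : Measurable fun p : ℝ × ℝ => G p.1 := hGm.comp measurable_fst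
  have m4 : Measurable fun p : ℝ × ℝ => G p.2 := hGm.comp measurable_snd
  have i11 : Integrable (fun p : ℝ × ℝ => F p.1 * G p.1) μ2 :=
    my_integrable μ2 (m1.mul m3) fun p => hbFG p.1
  have i12 : Integrable (fun p : ℝ × ℝ => F p.1 * G p.2) μ2 :=
    my_integrable μ2 (m1.mul m4) fun p => by
      rw [abs_mul]
      calc |F p.1| * |G p.2| ≤ 1 * 1 :=
            mul_le_mul (hbF _) (hbG _) (abs_nonneg _) zero_le_one
        _ = 1 := one_mul 1
  have i21 : Integrable (fun p : ℝ × ℝ => F p.2 * G p.1) μ2 :=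
    my_integrable μ2 (m2.mul m3) fun p => by
      rw [abs_mul]
      calc |F p.2| * |G p.1| ≤ 1 * 1 :=
            mul_le_mul (hbF _) (hbG _) (abs_nonneg _) zero_le_one
        _ = 1 := one_mul 1
  have i22 : Integrable (fun p : ℝ × ℝ => F p.2 * G p.2) μ2 :=
    my_integrable μ2 (m2.mul m4) fun p => hbFG p.2
  have e11 : ∫ p : ℝ × ℝ, F p.1 * G p.1 ∂μ2 = ∫ x, F x * G x ∂ν := by
    rw [hμ2, integral_prod _ i11]
    simp [integral_const]
  have e22 : ∫ p : ℝ × ℝ, F p.2 * G p.2 ∂μ2 = ∫ x, F x * G x ∂ν := by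
    rw [hμ2, integral_prod _ i22]
    simp [integral_const]
  have e12 : ∫ p : ℝ × ℝ, F p.1 * G p.2 ∂μ2 = (∫ x, F x ∂ν) * ∫ x, G x ∂ν := by
    rw [hμ2, integral_prod _ i12]
    simp_rw [integral_const_mul]
    rw [integral_mul_const]
  have e21 : ∫ p : ℝ × ℝ, F p.2 * G p.1 ∂μ2 = (∫ x, F x ∂ν) * ∫ x, G x ∂ν := by
    rw [hμ2, integral_prod _ i21]
    simp_rw [integral_mul_const]
    rw [integral_const_mul]
  have expand : ∫ p : ℝ × ℝ, (F p.1 - F p.2) * (G p.1 - G p.2) ∂μ2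
      = 2 * (∫ x, F x * G x ∂ν) - 2 * ((∫ x, F x ∂ν) * ∫ x, G x ∂ν) := by
    have : (fun p : ℝ × ℝ => (F p.1 - F p.2) * (G p.1 - G p.2))
        = fun p => F p.1 * G p.1 - F p.1 * G p.2 - F p.2 * G p.1 + F p.2 * G p.2 := by
      funext p; ring
    have iA : Integrable (fun p : ℝ × ℝ => F p.1 * G p.1 - F p.1 * G p.2) μ2 := i11.sub i12
    have iB : Integrable (fun p : ℝ × ℝ => F p.1 * G p.1 - F p.1 * G p.2 - F p.2 * G p.1) μ2 :=
      iA.sub i21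
    rw [this, integral_add iB i22, integral_sub iA i21, integral_sub i11 i12,
      e11, e12, e21, e22]
    ring
  rw [expand] at key
  linarith

/-- Harris inequality on finite product measures: monotone `[0,1]`-valued functions are
positively correlated. -/
lemma harris_pi (ν : Measure ℝ) [IsProbabilityMeasure ν] :
    ∀ (n : ℕ) (f g : (Fin n → ℝ) → ℝ), Monotone f → Monotone g →
      Measurable f → Measurable g →
      (∀ x, f x ∈ Set.Icc (0:ℝ) 1) → (∀ x, g x ∈ Set.Icc (0:ℝ) 1) →
      (∫ x, f x ∂(Measure.pi fun _ : Fin n => ν)) * (∫ x, g x ∂(Measure.pi fun _ : Fin n => ν))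
        ≤ ∫ x, f x * g x ∂(Measure.pi fun _ : Fin n => ν) := by
  intro n
  induction n with
  | zero =>
    intro f g _ _ _ _ _ _
    have hfc : ∀ x, f x = f default := fun x => congrArg f (Subsingleton.elim x default)
    have hgc : ∀ x, g x = g default := fun x => congrArg g (Subsingleton.elim x default)
    simp_rw [hfc, hgc]
    simp [integral_const]
  | succ n ih =>
    intro f g hf hg hfm hgm hf0 hg0
    set μn : Measure (Fin n → ℝ) := Measure.pi fun _ => ν with hμn
    set μ : Measure (Fin (n+1) → ℝ) := Measure.pi fun _ => ν with hμ
    set e := MeasurableEquiv.piFinSuccAbove (fun _ : Fin (n+1) => ℝ) 0 with he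
    have hmp : MeasurePreserving e μ (ν.prod μn) :=
      measurePreserving_piFinSuccAbove (fun _ => ν) 0
    have hsymm : MeasurePreserving e.symm (ν.prod μn) μ := hmp.symm e
    set C : ℝ × (Fin n → ℝ) → (Fin (n+1) → ℝ) := fun p => Fin.cons p.1 p.2 with hC
    have hesymm : ∀ p, e.symm p = C p := by
      intro p
      have : e.symm p = Fin.insertNth 0 p.1 p.2 := rfl
      rw [this, Fin.insertNth_zero']
    have hCmeas : Measurable C := by
      apply measurable_pi_iff.2
      intro i
      refine Fin.cases ?_ ?_ i
      · simpa [hC] using (measurable_fst : Measurable fun p : ℝ × (Fin n → ℝ) => p.1)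
      · intro j
        simpa [hC, Function.comp_def] using (measurable_pi_apply j).comp
          (measurable_snd : Measurable fun p : ℝ × (Fin n → ℝ) => p.2)
    have hCmono : Monotone C := by
      intro p q hpq i
      refine Fin.cases ?_ ?_ i
      · simpa [hC] using hpq.1
      · intro j; simpa [hC] using hpq.2 j
    -- transfer of integrals
    have key : ∀ φ : (Fin (n+1) → ℝ) → ℝ, Measurable φ → (∀ x, |φ x| ≤ 1) →
        ∫ x, φ x ∂μ = ∫ a, ∫ x, φ (Fin.cons a x) ∂μn ∂ν := by
      intro φ hφ hb
      rw [← hsymm.integral_comp e.symm.measurableEmbedding φ]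
      have hcongr : (fun p : ℝ × (Fin n → ℝ) => φ (e.symm p)) = fun p => φ (C p) := by
        funext p; rw [hesymm]
      rw [hcongr]
      have hint : Integrable (fun p : ℝ × (Fin n → ℝ) => φ (C p)) (ν.prod μn) :=
        my_integrable _ (hφ.comp hCmeas) fun p => hb _
      rw [integral_prod _ hint]
    set F : ℝ → ℝ := fun a => ∫ x, f (Fin.cons a x) ∂μn with hF
    set G : ℝ → ℝ := fun a => ∫ x, g (Fin.cons a x) ∂μn with hG
    have sliceMeas : ∀ (φ : (Fin (n+1) → ℝ) → ℝ), Measurable φ →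
        ∀ a : ℝ, Measurable fun x => φ (Fin.cons a x) := by
      intro φ hφ a
      exact (hφ.comp hCmeas).comp measurable_prodMk_left
    have sliceInt : ∀ (φ : (Fin (n+1) → ℝ) → ℝ), Measurable φ → (∀ x, |φ x| ≤ 1) →
        ∀ a : ℝ, Integrable (fun x => φ (Fin.cons a x)) μn := by
      intro φ hφ hb a
      exact my_integrable _ (sliceMeas φ hφ a) fun x => hb _
    have hbf : ∀ x, |f x| ≤ 1 := fun x => abs_le.2 ⟨by linarith [(hf0 x).1], (hf0 x).2⟩
    have hbg : ∀ x, |g x| ≤ 1 := fun x => abs_le.2 ⟨by linarith [(hg0 x).1], (hg0 x).2⟩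
    have hbfg : ∀ x, |f x * g x| ≤ 1 := by
      intro x
      rw [abs_mul]
      calc |f x| * |g x| ≤ 1 * 1 := mul_le_mul (hbf x) (hbg x) (abs_nonneg _) zero_le_one
        _ = 1 := one_mul 1
    have hFmeas : Measurable F := by
      have : StronglyMeasurable fun p : ℝ × (Fin n → ℝ) => f (C p) :=
        (hfm.comp hCmeas).stronglyMeasurable
      exact this.integral_prod_right'.measurable
    have hGmeas : Measurable G := by
      have : StronglyMeasurable fun p : ℝ × (Fin n → ℝ) => g (C p) :=
        (hgm.comp hCmeas).stronglyMeasurable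
      exact this.integral_prod_right'.measurable
    have hF0 : ∀ a, F a ∈ Set.Icc (0:ℝ) 1 := by
      intro a
      constructor
      · exact integral_nonneg fun x => (hf0 _).1
      · calc F a ≤ ∫ _x, (1:ℝ) ∂μn :=
              integral_mono (sliceInt f hfm hbf a) (integrable_const 1) fun x => (hf0 _).2
          _ = 1 := by simp
    have hG0 : ∀ a, G a ∈ Set.Icc (0:ℝ) 1 := by
      intro a
      constructor
      · exact integral_nonneg fun x => (hg0 _).1
      · calc G a ≤ ∫ _x, (1:ℝ) ∂μn :=
              integral_mono (sliceInt g hgm hbg a) (integrable_const 1) fun x => (hg0 _).2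
          _ = 1 := by simp
    have hFmono : Monotone F := by
      intro a b hab
      refine integral_mono (sliceInt f hfm hbf a) (sliceInt f hfm hbf b) fun x => ?_
      exact hf (hCmono (show (a, x) ≤ (b, x) from ⟨hab, le_rfl⟩))
    have hGmono : Monotone G := by
      intro a b hab
      refine integral_mono (sliceInt g hgm hbg a) (sliceInt g hgm hbg b) fun x => ?_
      exact hg (hCmono (show (a, x) ≤ (b, x) from ⟨hab, le_rfl⟩))
    -- put it together
    have ef : ∫ x, f x ∂μ = ∫ a, F a ∂ν := key f hfm hbf
    have eg : ∫ x, g x ∂μ = ∫ a, G a ∂ν := key g hgm hbg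
    have efg : ∫ x, f x * g x ∂μ = ∫ a, ∫ x, f (Fin.cons a x) * g (Fin.cons a x) ∂μn ∂ν :=
      key (fun x => f x * g x) (hfm.mul hgm) hbfg
    have step1 : ∫ a, F a * G a ∂ν ≤ ∫ a, ∫ x, f (Fin.cons a x) * g (Fin.cons a x) ∂μn ∂ν := by
      have intFG : Integrable (fun a => F a * G a) ν := by
        refine my_integrable _ (hFmeas.mul hGmeas) fun a => ?_
        rw [abs_mul]
        calc |F a| * |G a| ≤ 1 * 1 := by
              refine mul_le_mul ?_ ?_ (abs_nonneg _) zero_le_one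
              · exact abs_le.2 ⟨by linarith [(hF0 a).1], (hF0 a).2⟩
              · exact abs_le.2 ⟨by linarith [(hG0 a).1], (hG0 a).2⟩
          _ = 1 := one_mul 1
      have intInner : Integrable
          (fun a => ∫ x, f (Fin.cons a x) * g (Fin.cons a x) ∂μn) ν := by
        refine my_integrable _ ?_ fun a => ?_
        · have : StronglyMeasurable fun p : ℝ × (Fin n → ℝ) => f (C p) * g (C p) :=
            ((hfm.comp hCmeas).mul (hgm.comp hCmeas)).stronglyMeasurable
          exact this.integral_prod_right'.measurable
        · rw [abs_le]
          constructor
          · calc (-1:ℝ) ≤ 0 := by norm_num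
              _ ≤ _ := integral_nonneg fun x => mul_nonneg (hf0 _).1 (hg0 _).1
          · calc _ ≤ ∫ _x, (1:ℝ) ∂μn :=
                  integral_mono (sliceInt _ (hfm.mul hgm) hbfg a) (integrable_const 1)
                    fun x => by
                      calc f (Fin.cons a x) * g (Fin.cons a x) ≤ 1 * 1 :=
                            mul_le_mul (hf0 _).2 (hg0 _).2 (hg0 _).1 zero_le_one
                        _ = 1 := one_mul 1
              _ = 1 := by simp
      refine integral_mono intFG intInner fun a => ?_
      exact ih (fun x => f (Fin.cons a x)) (fun x => g (Fin.cons a x))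
        (fun x y hxy => hf (hCmono (show (a, x) ≤ (a, y) from ⟨le_rfl, hxy⟩)))
        (fun x y hxy => hg (hCmono (show (a, x) ≤ (a, y) from ⟨le_rfl, hxy⟩)))
        (sliceMeas f hfm a) (sliceMeas g hgm a)
        (fun x => hf0 _) (fun x => hg0 _)
    have step2 : (∫ a, F a ∂ν) * (∫ a, G a ∂ν) ≤ ∫ a, F a * G a ∂ν :=
      harris_one ν hFmono hGmono hFmeas hGmeas hF0 hG0
    rw [ef, eg, efg]
    exact le_trans step2 step1

/-- Harris inequality for antitone functions. -/
lemma harris_pi_antitone (ν : Measure ℝ) [IsProbabilityMeasure ν]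
    (n : ℕ) (f g : (Fin n → ℝ) → ℝ) (hf : Antitone f) (hg : Antitone g)
    (hfm : Measurable f) (hgm : Measurable g)
    (hf0 : ∀ x, f x ∈ Set.Icc (0:ℝ) 1) (hg0 : ∀ x, g x ∈ Set.Icc (0:ℝ) 1) :
    (∫ x, f x ∂(Measure.pi fun _ : Fin n => ν)) * (∫ x, g x ∂(Measure.pi fun _ : Fin n => ν))
      ≤ ∫ x, f x * g x ∂(Measure.pi fun _ : Fin n => ν) := by
  set μ : Measure (Fin n → ℝ) := Measure.pi fun _ => ν with hμ
  have hbf : ∀ x, |f x| ≤ 1 := fun x => abs_le.2 ⟨by linarith [(hf0 x).1], (hf0 x).2⟩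
  have hbg : ∀ x, |g x| ≤ 1 := fun x => abs_le.2 ⟨by linarith [(hg0 x).1], (hg0 x).2⟩
  have hbfg : ∀ x, |f x * g x| ≤ 1 := by
    intro x
    rw [abs_mul]
    calc |f x| * |g x| ≤ 1 * 1 := mul_le_mul (hbf x) (hbg x) (abs_nonneg _) zero_le_one
      _ = 1 := one_mul 1
  have hif : Integrable f μ := my_integrable _ hfm hbf
  have hig : Integrable g μ := my_integrable _ hgm hbg
  have hifg : Integrable (fun x => f x * g x) μ := my_integrable _ (hfm.mul hgm) hbfg
  have main := harris_pi ν n (fun x => 1 - f x) (fun x => 1 - g x)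
    (fun x y hxy => sub_le_sub_left (hf hxy) 1) (fun x y hxy => sub_le_sub_left (hg hxy) 1)
    (measurable_const.sub hfm) (measurable_const.sub hgm)
    (fun x => ⟨show (0:ℝ) ≤ 1 - f x by linarith [(hf0 x).2],
      show (1:ℝ) - f x ≤ 1 by linarith [(hf0 x).1]⟩)
    (fun x => ⟨show (0:ℝ) ≤ 1 - g x by linarith [(hg0 x).2],
      show (1:ℝ) - g x ≤ 1 by linarith [(hg0 x).1]⟩)
  have e1 : ∫ x, (1 - f x) ∂μ = 1 - ∫ x, f x ∂μ := by
    rw [integral_sub (integrable_const 1) hif]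
    simp
  have e2 : ∫ x, (1 - g x) ∂μ = 1 - ∫ x, g x ∂μ := by
    rw [integral_sub (integrable_const 1) hig]
    simp
  have e3 : ∫ x, (1 - f x) * (1 - g x) ∂μ
      = 1 - ∫ x, f x ∂μ - ∫ x, g x ∂μ + ∫ x, f x * g x ∂μ := by
    have hrw : (fun x => (1 - f x) * (1 - g x)) = fun x => 1 - f x - g x + f x * g x := by
      funext x; ring
    have i1 : Integrable (fun x => (1:ℝ) - f x) μ := (integrable_const 1).sub hif
    have i2 : Integrable (fun x => (1:ℝ) - f x - g x) μ := i1.sub hig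
    rw [hrw, integral_add i2 hifg, integral_sub i1 hig, integral_sub (integrable_const 1) hif]
    simp
  rw [e1, e2, e3] at main
  nlinarith [main]

/-- Harris inequality for two lower (decreasing) events. -/
lemma harris_sets (ν : Measure ℝ) [IsProbabilityMeasure ν] (n : ℕ)
    (A B : Set (Fin n → ℝ)) (hA : MeasurableSet A) (hB : MeasurableSet B)
    (hAl : IsLowerSet A) (hBl : IsLowerSet B) :
    (Measure.pi fun _ : Fin n => ν) A * (Measure.pi fun _ : Fin n => ν) B
      ≤ (Measure.pi fun _ : Fin n => ν) (A ∩ B) := by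
  set μ : Measure (Fin n → ℝ) := Measure.pi fun _ => ν with hμ
  have indmeas : ∀ (S : Set (Fin n → ℝ)), MeasurableSet S →
      Measurable (S.indicator (1 : (Fin n → ℝ) → ℝ)) := fun S hS =>
    measurable_const.indicator hS
  have indIcc : ∀ (S : Set (Fin n → ℝ)) x, S.indicator (1 : (Fin n → ℝ) → ℝ) x ∈
      Set.Icc (0:ℝ) 1 := by
    intro S x
    by_cases hx : x ∈ S <;> simp [Set.indicator_apply, hx]
  have indanti : ∀ (S : Set (Fin n → ℝ)), IsLowerSet S →
      Antitone (S.indicator (1 : (Fin n → ℝ) → ℝ)) := by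
    intro S hS x y hxy
    by_cases hy : y ∈ S
    · have hx : x ∈ S := hS hxy hy
      simp only [Set.indicator_of_mem hx, Set.indicator_of_mem hy, Pi.one_apply, le_refl]
    · rw [Set.indicator_of_notMem hy]
      exact (indIcc S x).1
  have key := harris_pi_antitone ν n (A.indicator 1) (B.indicator 1)
    (indanti A hAl) (indanti B hBl) (indmeas A hA) (indmeas B hB) (indIcc A) (indIcc B)
  have eA : ∫ x, A.indicator (1 : (Fin n → ℝ) → ℝ) x ∂μ = (μ A).toReal :=
    integral_indicator_one hA
  have eB : ∫ x, B.indicator (1 : (Fin n → ℝ) → ℝ) x ∂μ = (μ B).toReal :=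
    integral_indicator_one hB
  have eAB : ∫ x, A.indicator (1 : (Fin n → ℝ) → ℝ) x * B.indicator 1 x ∂μ
      = (μ (A ∩ B)).toReal := by
    have hrw : (fun x => A.indicator (1 : (Fin n → ℝ) → ℝ) x * B.indicator 1 x)
        = fun x => (A ∩ B).indicator (1 : (Fin n → ℝ) → ℝ) x := by
      funext x
      rw [Set.inter_indicator_one, Pi.mul_apply]
    rw [hrw]
    exact integral_indicator_one (hA.inter hB)
  rw [eA, eB, eAB] at key
  rw [← ENNReal.toReal_le_toReal
      (ENNReal.mul_ne_top (measure_ne_top μ A) (measure_ne_top μ B)) (measure_ne_top μ _),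
    ENNReal.toReal_mul]
  exact key

/-- Harris inequality for finitely many lower events. -/
lemma harris_finset (ν : Measure ℝ) [IsProbabilityMeasure ν] (n : ℕ)
    {ι : Type*} (s : Finset ι) (A : ι → Set (Fin n → ℝ))
    (hA : ∀ i, MeasurableSet (A i)) (hAl : ∀ i, IsLowerSet (A i)) :
    ∏ i ∈ s, (Measure.pi fun _ : Fin n => ν) (A i)
      ≤ (Measure.pi fun _ : Fin n => ν) (⋂ i ∈ s, A i) := by
  classical
  set μ : Measure (Fin n → ℝ) := Measure.pi fun _ => ν with hμ
  induction s using Finset.induction_on with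
  | empty =>
    rw [Finset.prod_empty]
    have : ⋂ i ∈ (∅ : Finset ι), A i = Set.univ := by simp
    rw [this, measure_univ]
  | @insert a s ha ih =>
    rw [Finset.prod_insert ha, Finset.set_biInter_insert]
    calc μ (A a) * ∏ i ∈ s, μ (A i) ≤ μ (A a) * μ (⋂ i ∈ s, A i) :=
          mul_le_mul_right ih _
      _ ≤ μ (A a ∩ ⋂ i ∈ s, A i) := by
          apply harris_sets ν n _ _ (hA a)
          · exact MeasurableSet.biInter s.countable_toSet fun i _ => hA i
          · exact hAl a
          · exact isLowerSet_iInter₂ fun i _ => hAl i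


/-- The joint law of finitely many of the i.i.d. variables is the product measure. -/
lemma map_iid_pi {Ω : Type*} [MeasurableSpace Ω] (Pr : Measure Ω) [IsProbabilityMeasure Pr]
    (y : ℕ → Ω → ℝ) (hmeas : ∀ i, Measurable (y i))
    (hindep : iIndepFun y Pr)
    (hident : ∀ i, Measure.map (y i) Pr = Measure.map (y 1) Pr)
    (r : ℕ) (e : Fin r → ℕ) (he : Function.Injective e) :
    Pr.map (fun ω (j : Fin r) => y (e j) ω) = Measure.pi fun _ : Fin r => Pr.map (y 1) := by
  classical
  haveI : IsProbabilityMeasure (Pr.map (y 1)) :=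
    Measure.isProbabilityMeasure_map (hmeas 1).aemeasurable
  set T : Ω → Fin r → ℝ := fun ω j => y (e j) ω with hTdef
  have hT : Measurable T := measurable_pi_iff.2 fun j => hmeas (e j)
  refine (Measure.pi_eq fun s hs => ?_).symm
  rw [Measure.map_apply hT (MeasurableSet.univ_pi hs)]
  set sets : ℕ → Set ℝ := fun nn => if hex : ∃ j, e j = nn then s hex.choose else Set.univ
    with hsets_def
  have hsets : ∀ j, sets (e j) = s j := by
    intro j
    have hex : ∃ j', e j' = e j := ⟨j, rfl⟩
    rw [hsets_def]
    simp only [dif_pos hex]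
    exact congrArg s (he hex.choose_spec)
  have hsets_meas : ∀ nn, MeasurableSet (sets nn) := by
    intro nn
    rw [hsets_def]
    by_cases hex : ∃ j, e j = nn
    · simpa only [dif_pos hex] using hs _
    · simpa only [dif_neg hex] using MeasurableSet.univ
  have hpre : T ⁻¹' Set.univ.pi s = ⋂ i ∈ Finset.image e Finset.univ, y i ⁻¹' sets i := by
    ext ω
    simp only [Set.mem_preimage, Set.mem_pi, Set.mem_univ, forall_const, Set.mem_iInter,
      Finset.mem_image, Finset.mem_univ, true_and]
    constructor
    · rintro hω i ⟨j, rfl⟩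
      rw [hsets j]
      exact hω j
    · intro hω j
      have := hω (e j) ⟨j, rfl⟩
      rwa [hsets j] at this
  rw [hpre]
  rw [(iIndepFun_iff_measure_inter_preimage_eq_mul.mp hindep) (Finset.image e Finset.univ)
    (fun i _ => hsets_meas i)]
  rw [Finset.prod_image (fun j _ j' _ hjj' => he hjj')]
  refine Finset.prod_congr rfl fun j _ => ?_
  rw [hsets j, ← Measure.map_apply (hmeas (e j)) (hs j), hident (e j)]

/-- for i.i.d. `y i`, the probability that the moving sums
`S k, …, S (k+N-1)` all stay below `h` is at least `Pr(S m < h)^N`. -/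
theorem fma_association_bound {Ω : Type*} [MeasurableSpace Ω]
    (Pr : Measure Ω) [IsProbabilityMeasure Pr]
    (m : ℕ) (hm : 1 ≤ m) (y : ℕ → Ω → ℝ)
    (hmeas : ∀ i, Measurable (y i))
    (hindep : iIndepFun y Pr)
    (hident : ∀ i, Measure.map (y i) Pr = Measure.map (y 1) Pr)
    (k N : ℕ) (hk : m ≤ k) (hN : 1 ≤ N) (h : ℝ) :
    (Pr {ω | movSum m y m ω < h}) ^ N
      ≤ Pr {ω | ∀ i ∈ Finset.Ico k (k + N), movSum m y i ω < h} := by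
  classical
  set ν : Measure ℝ := Pr.map (y 1) with hν
  haveI : IsProbabilityMeasure ν := Measure.isProbabilityMeasure_map (hmeas 1).aemeasurable
  set M : ℕ := k + N with hM
  set q : ENNReal := (Measure.pi fun _ : Fin m => ν) {x | ∑ j, x j < h} with hq
  have hsum_meas : MeasurableSet {x : Fin m → ℝ | ∑ j, x j < h} := by
    have hg : Measurable fun x : Fin m → ℝ => ∑ j, x j :=
      Finset.measurable_sum _ fun j _ => measurable_pi_apply j
    exact measurableSet_lt hg measurable_const
  -- every window probability equals `q`
  have window : ∀ i, m ≤ i → Pr {ω | movSum m y i ω < h} = q := by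
    intro i hi
    set a : ℕ := i + 1 - m with ha
    have hrepr : ∀ ω, movSum m y i ω = ∑ j : Fin m, y (a + (j : ℕ)) ω := by
      intro ω
      rw [movSum, ← Finset.Ico_add_one_right_eq_Icc, Finset.sum_Ico_eq_sum_range]
      have hcount : i + 1 - (i + 1 - m) = m := by omega
      rw [← ha, hcount, ← Fin.sum_univ_eq_sum_range (fun j => y (a + j) ω) m]
    set T : Ω → Fin m → ℝ := fun ω j => y (a + (j : ℕ)) ω with hT
    have hTm : Measurable T := measurable_pi_iff.2 fun j => hmeas _
    have hinj : Function.Injective fun j : Fin m => a + (j : ℕ) := by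
      intro j1 j2 hj
      simp only at hj
      exact Fin.ext (by omega)
    have hmap : Pr.map T = Measure.pi fun _ : Fin m => ν :=
      map_iid_pi Pr y hmeas hindep hident m _ hinj
    have hset : {ω | movSum m y i ω < h} = T ⁻¹' {x | ∑ j, x j < h} := by
      ext ω
      rw [Set.mem_preimage, Set.mem_setOf_eq, Set.mem_setOf_eq, hrepr ω]
    rw [hset, ← Measure.map_apply hTm hsum_meas, hmap, hq]
  -- the big product space
  set T : Ω → Fin M → ℝ := fun ω j => y (j : ℕ) ω with hT
  have hTm : Measurable T := measurable_pi_iff.2 fun j => hmeas _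
  have hmapM : Pr.map T = Measure.pi fun _ : Fin M => ν :=
    map_iid_pi Pr y hmeas hindep hident M _ Fin.val_injective
  set μ : Measure (Fin M → ℝ) := Measure.pi fun _ => ν with hμ
  set Bs : ℕ → Set (Fin M → ℝ) := fun i =>
    {x | ∑ j ∈ Finset.Icc (i + 1 - m) i, (if hj : j < M then x ⟨j, hj⟩ else 0) < h} with hBs
  have hBmeas : ∀ i, MeasurableSet (Bs i) := by
    intro i
    have hg : Measurable fun x : Fin M → ℝ =>
        ∑ j ∈ Finset.Icc (i + 1 - m) i, (if hj : j < M then x ⟨j, hj⟩ else 0) := by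
      refine Finset.measurable_sum _ fun j _ => ?_
      by_cases hj : j < M
      · simpa only [dif_pos hj] using measurable_pi_apply (⟨j, hj⟩ : Fin M)
      · simpa only [dif_neg hj] using (measurable_const : Measurable fun _ : Fin M → ℝ => (0:ℝ))
    exact measurableSet_lt hg measurable_const
  have hBlow : ∀ i, IsLowerSet (Bs i) := by
    intro i x' x hle hx
    simp only [hBs, Set.mem_setOf_eq] at hx ⊢
    refine lt_of_le_of_lt ?_ hx
    refine Finset.sum_le_sum fun j _ => ?_
    by_cases hj : j < M
    · simpa only [dif_pos hj] using hle ⟨j, hj⟩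
    · simp only [dif_neg hj]; exact le_rfl
  have hpre : ∀ i, i < M → T ⁻¹' Bs i = {ω | movSum m y i ω < h} := by
    intro i hiM
    ext ω
    rw [Set.mem_preimage, hBs]
    simp only [Set.mem_setOf_eq]
    rw [movSum]
    constructor
    · intro hlt
      refine lt_of_le_of_lt (le_of_eq ?_) hlt
      refine Finset.sum_congr rfl fun j hj => ?_
      have hjM : j < M := lt_of_le_of_lt (Finset.mem_Icc.mp hj).2 hiM
      rw [dif_pos hjM]
    · intro hlt
      refine lt_of_le_of_lt (le_of_eq ?_) hlt
      refine Finset.sum_congr rfl fun j hj => ?_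
      have hjM : j < M := lt_of_le_of_lt (Finset.mem_Icc.mp hj).2 hiM
      rw [dif_pos hjM]
  have hμB : ∀ i, m ≤ i → i < M → μ (Bs i) = q := by
    intro i him hiM
    rw [← hmapM, Measure.map_apply hTm (hBmeas i), hpre i hiM, window i him]
  -- main chain
  have hInter : {ω | ∀ i ∈ Finset.Ico k (k + N), movSum m y i ω < h}
      = T ⁻¹' (⋂ i ∈ Finset.Ico k (k + N), Bs i) := by
    ext ω
    simp only [Set.mem_setOf_eq, Set.mem_preimage, Set.mem_iInter]
    constructor
    · intro hω i hi
      have hiM : i < M := (Finset.mem_Ico.mp hi).2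
      have h2 : ω ∈ {ω | movSum m y i ω < h} := hω i hi
      rw [← hpre i hiM] at h2
      exact h2
    · intro hω i hi
      have hiM : i < M := (Finset.mem_Ico.mp hi).2
      have h2 : ω ∈ T ⁻¹' Bs i := hω i hi
      rw [hpre i hiM] at h2
      exact h2
  have hInterMeas : MeasurableSet (⋂ i ∈ Finset.Ico k (k + N), Bs i) :=
    MeasurableSet.biInter (Finset.Ico k (k + N)).countable_toSet fun i _ => hBmeas i
  rw [window m le_rfl, hInter, ← Measure.map_apply hTm hInterMeas, hmapM]
  have hNcard : k + N - k = N := by omega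
  calc q ^ N = ∏ _i ∈ Finset.Ico k (k + N), q := by
        rw [Finset.prod_const, Nat.card_Ico, hNcard]
    _ = ∏ i ∈ Finset.Ico k (k + N), μ (Bs i) :=
        (Finset.prod_congr rfl fun i hi =>
          (hμB i (le_trans hk (Finset.mem_Ico.mp hi).1) (Finset.mem_Ico.mp hi).2).symm)
    _ ≤ μ (⋂ i ∈ Finset.Ico k (k + N), Bs i) :=
        harris_finset ν M (Finset.Ico k (k + N)) Bs hBmeas hBlow
end

section
/- Let $y_1, y_2, \ldots$ be i.i.d. random variables under $\Pi$, $S_n = \sum_{i=n-m+1}^n y_i$, and $T_F(h) = \inf\{n \geq m : S_n \geq h\}$. Then the worst-case probability of false alarm within an interval of length $m_\alpha$ satisfies $\sup_{l \geq m} \Pi(l \leq T_F(h) < l + m_\alpha) = \Pi(m \leq T_F(h) < m + m_\alpha)$, i.e. the supremum is attained at $l = m$. -/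
open MeasureTheory ProbabilityTheory

/-- FMA stopping time `T_F(h) = inf {n ≥ m : S_n ≥ h}` (equal to `⊤` if no such `n`). -/
noncomputable def fmaTime {Ω : Type*} (m : ℕ) (y : ℕ → Ω → ℝ) (h : ℝ) (ω : Ω) : ℕ∞ :=
  sInf ((fun n : ℕ => (n : ℕ∞)) '' {n : ℕ | m ≤ n ∧ h ≤ movSum m y n ω})

/-! ### Auxiliary definitions and lemmas -/

/-- Extension of a finite tuple to a function on `ℕ` (by `0`). -/
noncomputable def extFin (N : ℕ) (v : Fin N → ℝ) (j : ℕ) : ℝ :=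
  if hj : j < N then v ⟨j, hj⟩ else 0

lemma measurable_extFin (N j : ℕ) : Measurable fun v : Fin N → ℝ => extFin N v j := by
  unfold extFin
  by_cases hj : j < N
  · simp only [hj, dif_pos]; exact measurable_pi_apply _
  · simp only [hj, dif_neg, not_false_iff]; exact measurable_const

/-- "Some crossing within the first `mα` windows" event on the canonical space. -/
def crossSet (m mα : ℕ) (h : ℝ) : Set (Fin (m + mα - 1) → ℝ) :=
  {v | ∃ t < mα, h ≤ ∑ j ∈ Finset.Icc t (t + m - 1), extFin (m + mα - 1) v j}

lemma measurableSet_crossSet (m mα : ℕ) (h : ℝ) : MeasurableSet (crossSet m mα h) := by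
  have : crossSet m mα h =
      ⋃ t ∈ Set.Iio mα,
        {v : Fin (m + mα - 1) → ℝ |
          h ≤ ∑ j ∈ Finset.Icc t (t + m - 1), extFin (m + mα - 1) v j} := by
    ext v; simp [crossSet]
  rw [this]
  refine MeasurableSet.biUnion (Set.to_countable _) fun t _ => ?_
  exact measurableSet_le measurable_const (Finset.measurable_sum _ fun j _ => measurable_extFin _ _)

lemma movSum_shift {Ω : Type*} (m : ℕ) (hm : 1 ≤ m) (y : ℕ → Ω → ℝ) (l t : ℕ) (hl : m ≤ l)
    (ω : Ω) :
    movSum m y (l + t) ω = ∑ j ∈ Finset.Icc t (t + m - 1), y ((l + 1 - m) + j) ω := by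
  unfold movSum
  have hIcc : Finset.Icc (l + t + 1 - m) (l + t)
      = Finset.map (addLeftEmbedding (l + 1 - m)) (Finset.Icc t (t + m - 1)) := by
    rw [Finset.map_add_left_Icc]
    congr 1 <;> omega
  rw [hIcc, Finset.sum_map]
  rfl

/-- The joint law of `(y (a+0), …, y (a+N-1))` for i.i.d. `y` is the product measure,
independently of `a`. -/
lemma joint_law {Ω : Type*} [MeasurableSpace Ω] (Pr : Measure Ω) [IsProbabilityMeasure Pr]
    (y : ℕ → Ω → ℝ) (hmeas : ∀ i, Measurable (y i))
    (hindep : iIndepFun y Pr)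
    (hident : ∀ i, Measure.map (y i) Pr = Measure.map (y 1) Pr)
    (N a : ℕ) :
    Measure.map (fun ω (i : Fin N) => y (a + i) ω) Pr
      = Measure.pi (fun _ : Fin N => Measure.map (y 1) Pr) := by
  haveI hμ : IsProbabilityMeasure (Measure.map (y 1) Pr) :=
    Measure.isProbabilityMeasure_map (hmeas 1).aemeasurable
  have hΦ : Measurable (fun ω (i : Fin N) => y (a + i) ω) :=
    measurable_pi_lambda _ fun i => hmeas _
  refine (Measure.pi_eq fun s hs => ?_).symm
  rw [Measure.map_apply hΦ (MeasurableSet.univ_pi hs)]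
  -- sets indexed by ℕ
  set A : ℕ → Set ℝ := fun n => if hn : a ≤ n ∧ n - a < N then s ⟨n - a, hn.2⟩ else Set.univ
    with hA_def
  have hA_eval : ∀ i : Fin N, A (a + i) = s i := by
    intro i
    have h1 : a ≤ a + i ∧ a + i - a < N := ⟨Nat.le_add_right _ _, by simp [i.2]⟩
    have h2 : (⟨a + i - a, h1.2⟩ : Fin N) = i := by
      apply Fin.ext; simp
    simp [hA_def, h1, h2]
  have hA_meas : ∀ n, MeasurableSet (A n) := by
    intro n
    rw [hA_def]
    by_cases hn : a ≤ n ∧ n - a < N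
    · simp only [hn, dif_pos]; exact hs _
    · simp only [hn, dif_neg, not_false_iff]; exact MeasurableSet.univ
  set S : Finset ℕ := Finset.image (fun i : Fin N => a + i) Finset.univ with hS_def
  have hinj : ∀ i ∈ (Finset.univ : Finset (Fin N)), ∀ j ∈ (Finset.univ : Finset (Fin N)),
      a + (i : ℕ) = a + (j : ℕ) → i = j := by
    intro i _ j _ hij
    exact Fin.ext (by omega)
  have key := hindep.measure_inter_preimage_eq_mul S (sets := A) (fun n _ => hA_meas n)
  have hset : (fun ω (i : Fin N) => y (a + i) ω) ⁻¹' Set.pi Set.univ s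
      = ⋂ n ∈ S, y n ⁻¹' A n := by
    ext ω
    simp only [Set.mem_preimage, Set.mem_pi, Set.mem_univ, forall_true_left, Set.mem_iInter,
      hS_def, Finset.mem_image, Finset.mem_univ, true_and]
    constructor
    · rintro hω n ⟨i, rfl⟩
      rw [hA_eval i]; exact hω i
    · intro hω i
      have := hω (a + i) ⟨i, rfl⟩
      rwa [hA_eval i] at this
  rw [hset, key, hS_def, Finset.prod_image hinj]
  refine Finset.prod_congr rfl fun i _ => ?_
  rw [hA_eval i]
  rw [← Measure.map_apply (hmeas _) (hs i), hident (a + i)]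

lemma fmaTime_ge {Ω : Type*} (m : ℕ) (y : ℕ → Ω → ℝ) (h : ℝ) (ω : Ω) :
    (m : ℕ∞) ≤ fmaTime m y h ω := by
  refine le_sInf ?_
  rintro _ ⟨n, ⟨hn, _⟩, rfl⟩
  show (m : ℕ∞) ≤ (n : ℕ∞)
  exact_mod_cast hn

lemma fmaTime_le {Ω : Type*} {m : ℕ} {y : ℕ → Ω → ℝ} {h : ℝ} {ω : Ω} {n : ℕ}
    (hn : m ≤ n) (hS : h ≤ movSum m y n ω) : fmaTime m y h ω ≤ (n : ℕ∞) :=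
  sInf_le ⟨n, ⟨hn, hS⟩, rfl⟩

lemma exists_of_fmaTime_lt {Ω : Type*} {m : ℕ} {y : ℕ → Ω → ℝ} {h : ℝ} {ω : Ω} {c : ℕ}
    (hc : fmaTime m y h ω < (c : ℕ∞)) :
    ∃ n, m ≤ n ∧ h ≤ movSum m y n ω ∧ n < c := by
  rw [fmaTime, sInf_lt_iff] at hc
  obtain ⟨_, ⟨n, ⟨hn, hS⟩, rfl⟩, hlt⟩ := hc
  refine ⟨n, hn, hS, ?_⟩
  have hlt' : (n : ℕ∞) < (c : ℕ∞) := hlt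
  exact_mod_cast hlt'

/-- the worst-case false alarm probability
`sup_{l ≥ m} Pr(l ≤ T_F(h) < l + mα)` is attained at `l = m`. -/
theorem fma_worst_case_false_alarm_at_m {Ω : Type*} [MeasurableSpace Ω]
    (Pr : Measure Ω) [IsProbabilityMeasure Pr]
    (m : ℕ) (hm : 1 ≤ m) (mα : ℕ) (hmα : 1 ≤ mα) (y : ℕ → Ω → ℝ)
    (hmeas : ∀ i, Measurable (y i))
    (hindep : iIndepFun y Pr)
    (hident : ∀ i, Measure.map (y i) Pr = Measure.map (y 1) Pr)
    (h : ℝ) :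
    (⨆ (l : ℕ) (_ : m ≤ l),
        Pr {ω | (l : ℕ∞) ≤ fmaTime m y h ω ∧ fmaTime m y h ω < (l + mα : ℕ)})
      = Pr {ω | (m : ℕ∞) ≤ fmaTime m y h ω ∧ fmaTime m y h ω < (m + mα : ℕ)} := by
  set N := m + mα - 1 with hN
  set E := crossSet m mα h with hE
  -- the shifted coordinate map
  set Φ : ℕ → Ω → (Fin N → ℝ) := fun a ω i => y (a + i) ω with hΦ_def
  have hΦ_meas : ∀ a, Measurable (Φ a) := fun a => measurable_pi_lambda _ fun i => hmeas _
  -- probability of the preimage of E is the same for every shift a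
  have hPrE : ∀ a, Pr (Φ a ⁻¹' E) = Pr (Φ 1 ⁻¹' E) := by
    intro a
    have h1 : Pr (Φ a ⁻¹' E) = (Measure.map (Φ a) Pr) E :=
      (Measure.map_apply (hΦ_meas a) (measurableSet_crossSet m mα h)).symm
    have h2 : Pr (Φ 1 ⁻¹' E) = (Measure.map (Φ 1) Pr) E :=
      (Measure.map_apply (hΦ_meas 1) (measurableSet_crossSet m mα h)).symm
    rw [h1, h2, joint_law Pr y hmeas hindep hident N a,
      joint_law Pr y hmeas hindep hident N 1]
  -- the event at level l is contained in Φ (l+1-m) ⁻¹' E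
  have hsub : ∀ l, m ≤ l →
      {ω | (l : ℕ∞) ≤ fmaTime m y h ω ∧ fmaTime m y h ω < (l + mα : ℕ)}
        ⊆ Φ (l + 1 - m) ⁻¹' E := by
    intro l hl ω hω
    obtain ⟨hge, hlt⟩ := hω
    obtain ⟨n, hnm, hS, hnlt⟩ := exists_of_fmaTime_lt hlt
    have hln : l ≤ n := by
      have := le_trans hge (fmaTime_le hnm hS)
      exact_mod_cast this
    set t := n - l with ht
    have hnt : n = l + t := by omega
    have htα : t < mα := by omega
    refine ⟨t, htα, ?_⟩
    have hsum : ∑ j ∈ Finset.Icc t (t + m - 1), extFin N (Φ (l + 1 - m) ω) j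
        = ∑ j ∈ Finset.Icc t (t + m - 1), y ((l + 1 - m) + j) ω := by
      refine Finset.sum_congr rfl fun j hj => ?_
      rw [Finset.mem_Icc] at hj
      have hjN : j < N := by omega
      simp [extFin, hjN, hΦ_def]
    rw [hsum, ← movSum_shift m hm y l t hl, ← hnt]
    exact hS
  -- at level m the containment is an equality
  have heq : {ω | (m : ℕ∞) ≤ fmaTime m y h ω ∧ fmaTime m y h ω < (m + mα : ℕ)}
      = Φ 1 ⁻¹' E := by
    have h1 : m + 1 - m = 1 := by omega
    refine Set.Subset.antisymm (by simpa [h1] using hsub m le_rfl) ?_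
    intro ω hω
    obtain ⟨t, htα, hS⟩ := hω
    have hsum : ∑ j ∈ Finset.Icc t (t + m - 1), extFin N (Φ 1 ω) j
        = ∑ j ∈ Finset.Icc t (t + m - 1), y (1 + j) ω := by
      refine Finset.sum_congr rfl fun j hj => ?_
      rw [Finset.mem_Icc] at hj
      have hjN : j < N := by omega
      simp [extFin, hjN, hΦ_def]
    rw [hsum] at hS
    have hS' : h ≤ movSum m y (m + t) ω := by
      rw [movSum_shift m hm y m t le_rfl, h1]; exact hS
    refine ⟨fmaTime_ge m y h ω, ?_⟩
    calc fmaTime m y h ω ≤ ((m + t : ℕ) : ℕ∞) := fmaTime_le (Nat.le_add_right _ _) hS'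
      _ < ((m + mα : ℕ) : ℕ∞) := by exact_mod_cast Nat.add_lt_add_left htα m
  refine le_antisymm ?_ ?_
  · refine iSup₂_le fun l hl => ?_
    calc Pr {ω | (l : ℕ∞) ≤ fmaTime m y h ω ∧ fmaTime m y h ω < (l + mα : ℕ)}
        ≤ Pr (Φ (l + 1 - m) ⁻¹' E) := measure_mono (hsub l hl)
      _ = Pr (Φ 1 ⁻¹' E) := hPrE _
      _ = Pr {ω | (m : ℕ∞) ≤ fmaTime m y h ω ∧ fmaTime m y h ω < (m + mα : ℕ)} := by
          rw [heq]
  · exact le_iSup₂ (f := fun (l : ℕ) (_ : m ≤ l) =>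
      Pr {ω | (l : ℕ∞) ≤ fmaTime m y h ω ∧ fmaTime m y h ω < (l + mα : ℕ)}) m le_rfl
end

section
/- Consider the transient change model: under measure $\mathbb{P}_v$ with change time $v > m$, the variables $y_n$ for $n < v$ or $n \geq v+m$ are i.i.d. with law $f_0$ and $y_v,\ldots,y_{v+m-1}$ are i.i.d. with law $f_1$, all independent. Let $S_n = \sum_{i=n-m+1}^n y_i$ and $T_F(h) = \inf\{n\geq m: S_n \geq h\}$. Then the worst-case probability of missed detection satisfies $\sup_{v > m} \mathbb{P}_v(T_F(h) \geq v+m \mid T_F(h) \geq v) \leq \mathbb{P}_1(S_m < h)$, where $\mathbb{P}_1(S_m < h)$ is the probability that the sum of $m$ i.i.d. draws from $f_1$ is below $h$. -/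
open MeasureTheory ProbabilityTheory
open scoped ProbabilityTheory

/-- Characterization of the event `{v ≤ T_F(h)}`. -/
lemma fmaTime_le_iff' {Ω : Type*} (m : ℕ) (y : ℕ → Ω → ℝ) (h : ℝ) (v : ℕ) (ω : Ω) :
    ((v : ℕ∞) ≤ fmaTime m y h ω) ↔ ∀ n, m ≤ n → n < v → movSum m y n ω < h := by
  unfold fmaTime
  rw [le_sInf_iff]
  constructor
  · intro H n hmn hnv
    by_contra hge
    push_neg at hge
    have := H (n : ℕ∞) ⟨n, ⟨hmn, hge⟩, rfl⟩
    have := Nat.cast_le.mp this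
    omega
  · rintro H b ⟨n, ⟨hmn, hs⟩, rfl⟩
    have : v ≤ n := by
      by_contra hc
      push_neg at hc
      exact absurd hs (not_le.mpr (H n hmn hc))
    show (v : ℕ∞) ≤ (n : ℕ∞)
    exact_mod_cast this

lemma add_fin_injective (v m : ℕ) :
    Function.Injective (fun i : Fin m => v + (i : ℕ)) := by
  intro a b hab
  simp only at hab
  exact Fin.ext (by omega)

/-- The tuple of `m` independent samples with common law `μ1` has law `Measure.pi`. -/
lemma map_tuple_eq_pi {Ω : Type*} [MeasurableSpace Ω] (m v : ℕ) (y : ℕ → Ω → ℝ)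
    (hmeas : ∀ i, Measurable (y i)) (μ1 : Measure ℝ) [IsProbabilityMeasure μ1]
    (P : Measure Ω) [IsProbabilityMeasure P]
    (hindep : iIndepFun y P)
    (hlaw : ∀ i : Fin m, Measure.map (y (v + i)) P = μ1) :
    Measure.map (fun ω (i : Fin m) => y (v + i) ω) P
      = Measure.pi (fun _ => μ1) := by
  classical
  refine (Measure.pi_eq fun s hs => ?_).symm
  rw [Measure.map_apply (measurable_pi_lambda _ fun i => hmeas _)
    (MeasurableSet.univ_pi hs)]
  set u : ℕ → Set ℝ := fun n => if hn : n - v < m then s ⟨n - v, hn⟩ else Set.univ with hu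
  have hu_meas : ∀ n, MeasurableSet (u n) := by
    intro n
    rw [hu]
    dsimp only
    split
    · exact hs _
    · exact MeasurableSet.univ
  have hu_eq : ∀ i : Fin m, u (v + i) = s i := by
    intro i
    rw [hu]
    dsimp only
    simp only [Nat.add_sub_cancel_left]
    rw [dif_pos i.isLt]
  have hpre : (fun ω (i : Fin m) => y (v + i) ω) ⁻¹' Set.pi Set.univ s
      = ⋂ n ∈ Finset.image (fun i : Fin m => v + (i : ℕ)) Finset.univ, y n ⁻¹' u n := by
    ext ω
    simp only [Set.mem_preimage, Set.mem_pi, Set.mem_univ, true_implies,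
      Set.mem_iInter, Finset.mem_image, Finset.mem_univ, true_and]
    constructor
    · rintro H n ⟨i, rfl⟩
      rw [hu_eq i]
      exact H i
    · intro H i
      have := H (v + i) ⟨i, rfl⟩
      rwa [hu_eq i] at this
  rw [hpre, hindep.meas_biInter (fun n _ => ⟨u n, hu_meas n, rfl⟩),
    Finset.prod_image (fun a _ b _ hab => add_fin_injective v m hab)]
  refine Finset.prod_congr rfl fun i _ => ?_
  rw [hu_eq i, ← hlaw i, Measure.map_apply (hmeas _) (hs i)]

/-- Probability that the sum of `m` consecutive independent `μ1`-samples is `< h`. -/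
lemma prob_movSum_lt {Ω : Type*} [MeasurableSpace Ω] (m v : ℕ) (hm : 1 ≤ m) (hv : 1 ≤ v)
    (y : ℕ → Ω → ℝ) (hmeas : ∀ i, Measurable (y i)) (μ1 : Measure ℝ)
    [IsProbabilityMeasure μ1] (P : Measure Ω) [IsProbabilityMeasure P]
    (hindep : iIndepFun y P)
    (hlaw : ∀ i : Fin m, Measure.map (y (v + i)) P = μ1) (h : ℝ) :
    P {ω | movSum m y (v + m - 1) ω < h}
      = Measure.pi (fun _ : Fin m => μ1) {x | ∑ i, x i < h} := by
  have hmapped := map_tuple_eq_pi m v y hmeas μ1 P hindep hlaw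
  have hIcc : Finset.Icc (v + m - 1 + 1 - m) (v + m - 1)
      = Finset.image (fun i : Fin m => v + (i : ℕ)) Finset.univ := by
    ext n
    simp only [Finset.mem_Icc, Finset.mem_image, Finset.mem_univ, true_and]
    constructor
    · intro hn
      exact ⟨⟨n - v, by omega⟩, by simp; omega⟩
    · rintro ⟨i, rfl⟩
      have := i.isLt
      omega
  have hsum : ∀ ω, movSum m y (v + m - 1) ω = ∑ i : Fin m, y (v + i) ω := by
    intro ω
    unfold movSum
    rw [hIcc, Finset.sum_image (fun a _ b _ hab => add_fin_injective v m hab)]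
  have hmeasset : MeasurableSet {x : Fin m → ℝ | ∑ i, x i < h} :=
    measurableSet_lt (Finset.measurable_sum _ fun i _ => measurable_pi_apply i)
      measurable_const
  have hset : {ω | movSum m y (v + m - 1) ω < h}
      = (fun ω (i : Fin m) => y (v + i) ω) ⁻¹' {x | ∑ i, x i < h} := by
    ext ω
    simp [hsum ω]
  rw [hset, ← Measure.map_apply (measurable_pi_lambda _ fun i => hmeas _) hmeasset,
    hmapped]

/-- in the transient change model (under `P v` the samples
`y v, …, y (v+m-1)` have the post-change law `μ1` and all other samples the
pre-change law `μ0`, all independent), the worst-case probability of missed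
detection of the FMA stopping time is bounded by `P_1(S_m < h)`. -/
theorem fma_missed_detection_bound {Ω : Type*} [MeasurableSpace Ω]
    (m : ℕ) (hm : 1 ≤ m) (y : ℕ → Ω → ℝ)
    (hmeas : ∀ i, Measurable (y i))
    (μ0 μ1 : Measure ℝ) [IsProbabilityMeasure μ0] [IsProbabilityMeasure μ1]
    (hμ : μ0 ≠ μ1)
    (P : ℕ → Measure Ω) (hP : ∀ v, IsProbabilityMeasure (P v))
    (hindep : ∀ v, iIndepFun y (P v))
    (hpre : ∀ v n, 1 ≤ v → (n < v ∨ v + m ≤ n) → Measure.map (y n) (P v) = μ0)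
    (hpost : ∀ v n, 1 ≤ v → v ≤ n → n < v + m → Measure.map (y n) (P v) = μ1)
    (h : ℝ) :
    (⨆ (v : ℕ) (_ : m < v),
        (P v)[{ω | ((v + m : ℕ) : ℕ∞) ≤ fmaTime m y h ω} |
              {ω | ((v : ℕ) : ℕ∞) ≤ fmaTime m y h ω}])
      ≤ (P 1) {ω | movSum m y m ω < h} := by
  classical
  haveI := hP 1
  -- the common value of `P_v(S_{v+m-1} < h)`
  have key : ∀ v : ℕ, 1 ≤ v →
      P v {ω | movSum m y (v + m - 1) ω < h} = P 1 {ω | movSum m y m ω < h} := by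
    intro v hv
    haveI := hP v
    have h1 := prob_movSum_lt m v hm hv y hmeas μ1 (P v) (hindep v)
      (fun i => hpost v (v + i) hv (by omega) (by have := i.isLt; omega)) h
    have h2 := prob_movSum_lt m 1 hm le_rfl y hmeas μ1 (P 1) (hindep 1)
      (fun i => hpost 1 (1 + i) le_rfl (by omega) (by have := i.isLt; omega)) h
    have e : 1 + m - 1 = m := by omega
    rw [e] at h2
    rw [h1, h2]
  refine iSup_le fun v => iSup_le fun hv => ?_
  haveI := hP v
  have hv1 : 1 ≤ v := by omega
  set B := {ω : Ω | ((v : ℕ) : ℕ∞) ≤ fmaTime m y h ω} with hB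
  set A := {ω : Ω | ((v + m : ℕ) : ℕ∞) ≤ fmaTime m y h ω} with hA
  set C := {ω : Ω | movSum m y (v + m - 1) ω < h} with hC
  -- sub-σ-algebras
  have hmain : MeasurableSet B ∧ P v (B ∩ C) = P v B * P v C := by
    have h_le : ∀ i, MeasurableSpace.comap (y i) inferInstance ≤ ‹MeasurableSpace Ω› :=
      fun i => (hmeas i).comap_le
    set mS : MeasurableSpace Ω :=
      ⨆ i ∈ {i : ℕ | i < v}, MeasurableSpace.comap (y i) inferInstance with hmS
    set mT : MeasurableSpace Ω :=
      ⨆ i ∈ {i : ℕ | v ≤ i}, MeasurableSpace.comap (y i) inferInstance with hmT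
    have hy_mS : ∀ i, i < v → Measurable[mS] (y i) := fun i hi =>
      measurable_iff_comap_le.mpr
        (le_iSup₂ (f := fun (i : ℕ) (_ : i ∈ {i : ℕ | i < v}) =>
          MeasurableSpace.comap (y i) inferInstance) i hi)
    have hy_mT : ∀ i, v ≤ i → Measurable[mT] (y i) := fun i hi =>
      measurable_iff_comap_le.mpr
        (le_iSup₂ (f := fun (i : ℕ) (_ : i ∈ {i : ℕ | v ≤ i}) =>
          MeasurableSpace.comap (y i) inferInstance) i hi)
    have hIndepST : Indep mS mT (P v) := by
      rw [hmS, hmT]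
      refine indep_iSup_of_disjoint h_le (hindep v).iIndep ?_
      rw [Set.disjoint_left]
      intro i hi hi'
      simp only [Set.mem_setOf_eq] at hi hi'
      omega
    -- B is mS-measurable
    have hBeq : B = ⋂ n ∈ Finset.Ico m v, {ω : Ω | movSum m y n ω < h} := by
      ext ω
      simp only [hB, Set.mem_setOf_eq, Set.mem_iInter, Finset.mem_Ico,
        fmaTime_le_iff']
      exact ⟨fun H n hn => H n hn.1 hn.2, fun H n h1 h2 => H n ⟨h1, h2⟩⟩
    have hB_mS : MeasurableSet[mS] B := by
      rw [hBeq]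
      refine Finset.measurableSet_biInter _ fun n hn => ?_
      rw [Finset.mem_Ico] at hn
      refine measurableSet_lt (Finset.measurable_sum _ fun i hi => ?_) measurable_const
      rw [Finset.mem_Icc] at hi
      exact hy_mS i (by omega)
    have hC_mT : MeasurableSet[mT] C := by
      refine measurableSet_lt (Finset.measurable_sum _ fun i hi => ?_) measurable_const
      rw [Finset.mem_Icc] at hi
      exact hy_mT i (by omega)
    exact ⟨iSup₂_le (fun i _ => h_le i) B hB_mS,
      (Indep_iff mS mT (P v)).mp hIndepST B C hB_mS hC_mT⟩
  -- A ⊆ C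
  have hAC : A ⊆ C := by
    intro ω hω
    rw [hA, Set.mem_setOf_eq, fmaTime_le_iff'] at hω
    exact hω (v + m - 1) (by omega) (by omega)
  obtain ⟨hBmeas, hmul⟩ := hmain
  have hinv : (P v B)⁻¹ * P v B ≤ 1 := by
    rcases eq_or_ne (P v B) 0 with h0 | h0
    · simp [h0]
    · rw [ENNReal.inv_mul_cancel h0 (measure_ne_top _ _)]
  calc (P v)[A | B] = (P v B)⁻¹ * P v (B ∩ A) := cond_apply hBmeas (P v) A
    _ ≤ (P v B)⁻¹ * P v (B ∩ C) :=
        mul_le_mul_right (measure_mono (Set.inter_subset_inter_right _ hAC)) _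
    _ = (P v B)⁻¹ * (P v B * P v C) := by rw [hmul]
    _ = ((P v B)⁻¹ * P v B) * P v C := by rw [mul_assoc]
    _ ≤ 1 * P v C := mul_le_mul_left hinv _
    _ = P v C := one_mul _
    _ = P 1 {ω | movSum m y m ω < h} := key v hv1
end
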